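/- Let G be the CDF of a positive random variable with mean g1 and second moment g2, and let μ satisfy μ g1 > 1. Then the unique root γ_G ∈ (0,1) of z = Ĝ(μ - μz) satisfies γ_G ≤ 1 + (g1²/g2)(ℓ - 1), where ℓ ∈ (0,1) is the unique root of z = exp(-μ g1 + μ g1 z). -/

import Mathlib

open MeasureTheory Set

private lemma exp_taylor_rep (y : ℝ) :
    Real.exp y - 1 - y = y ^ 2 * ∫ r in (0:ℝ)..1, (1 - r) * Real.exp (y * r) := by
  rcases eq_or_ne y 0 with rfl | hy
  · simp
  · have key : ∫ r in (0:ℝ)..1, (1 - r) * Real.exp (y * r)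
        = (fun r : ℝ => Real.exp (y * r) * (1/y + 1/y^2 - r/y)) 1
          - (fun r : ℝ => Real.exp (y * r) * (1/y + 1/y^2 - r/y)) 0 := by
      apply intervalIntegral.integral_eq_sub_of_hasDerivAt
        (f := fun r : ℝ => Real.exp (y * r) * (1/y + 1/y^2 - r/y))
        (f' := fun r : ℝ => (1 - r) * Real.exp (y * r))
      · intro r _
        have h1 : HasDerivAt (fun r : ℝ => Real.exp (y * r)) (Real.exp (y * r) * y) r := by
          simpa [one_div] using ((hasDerivAt_id r).const_mul y).exp
        have h2 : HasDerivAt (fun r : ℝ => 1/y + 1/y^2 - r/y) (-(1/y)) r :=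
          ((hasDerivAt_id r).div_const y).const_sub (1/y + 1/y^2)
        have h3 : HasDerivAt (fun r : ℝ => Real.exp (y * r) * (1/y + 1/y^2 - r/y)) _ r :=
          h1.mul h2
        refine h3.congr_deriv ?_
        field_simp
        ring
      · exact ((continuous_const.sub continuous_id).mul
          (Real.continuous_exp.comp (continuous_const.mul continuous_id))).intervalIntegrable 0 1
    rw [key]
    simp only [mul_one, mul_zero, Real.exp_zero]
    field_simp
    ring

private lemma exp_quad_bound (y v : ℝ) (hv : 0 < v) (hyv : y ≤ v) :
    Real.exp y ≤ 1 + y + y ^ 2 / v ^ 2 * (Real.exp v - 1 - v) := by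
  have hmono : (∫ r in (0:ℝ)..1, (1 - r) * Real.exp (y * r))
      ≤ ∫ r in (0:ℝ)..1, (1 - r) * Real.exp (v * r) := by
    apply intervalIntegral.integral_mono_on (by norm_num)
      (((continuous_const.sub continuous_id).mul
          (Real.continuous_exp.comp (continuous_const.mul continuous_id))).intervalIntegrable 0 1)
      (((continuous_const.sub continuous_id).mul
          (Real.continuous_exp.comp (continuous_const.mul continuous_id))).intervalIntegrable 0 1)
    intro r hr
    have h1 : y * r ≤ v * r := mul_le_mul_of_nonneg_right hyv hr.1
    have h2 : (0:ℝ) ≤ 1 - r := by linarith [hr.2]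
    exact mul_le_mul_of_nonneg_left (Real.exp_le_exp.2 h1) h2
  have h1 := exp_taylor_rep y
  have h2 := exp_taylor_rep v
  have e2 : y ^ 2 / v ^ 2 * (Real.exp v - 1 - v)
      = y ^ 2 * ∫ r in (0:ℝ)..1, (1 - r) * Real.exp (v * r) := by
    rw [h2]; field_simp
  rw [e2]
  have := mul_le_mul_of_nonneg_left hmono (sq_nonneg y)
  linarith

set_option maxHeartbeats 1000000 in
/-- Rolski's upper bound: if `γ ∈ (0,1)` is the root of `z = Ĝ(m - m z)` for the law
`ν` of a positive random variable with mean `g1` and second moment `g2`, `m g1 > 1`,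
and `ℓ ∈ (0,1)` is the root of `z = exp(-m g1 (1 - z))`, then
`γ ≤ 1 + (g1²/g2)(ℓ - 1)`. -/
theorem root_le_rolski_bound
    (ν : Measure ℝ) [IsProbabilityMeasure ν] (hνpos : ν (Set.Iic 0) = 0)
    (g1 g2 m γ l : ℝ) (hm : 0 < m) (hρ : 1 < m * g1)
    (hint1 : Integrable (fun x => x) ν) (hint2 : Integrable (fun x => x ^ 2) ν)
    (hmean : ∫ x, x ∂ν = g1) (hsec : ∫ x, x ^ 2 ∂ν = g2)
    (hγ : γ ∈ Set.Ioo (0 : ℝ) 1)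
    (hγroot : (∫ x, Real.exp (-(m - m * γ) * x) ∂ν) = γ)
    (hl : l ∈ Set.Ioo (0 : ℝ) 1)
    (hlroot : l = Real.exp (-(m * g1) + m * g1 * l)) :
    γ ≤ 1 + (g1 ^ 2 / g2) * (l - 1) := by
  -- a.e. positivity
  have hae : ∀ᵐ x ∂ν, 0 < x := by
    rw [ae_iff]
    simpa [Set.Iic, not_lt] using hνpos
  -- basic positivity facts
  have hg1 : 0 < g1 := by
    by_contra h
    push_neg at h
    nlinarith [mul_nonpos_of_nonneg_of_nonpos hm.le h]
  have hg2nn : 0 ≤ g2 := by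
    rw [← hsec]
    exact integral_nonneg fun x => sq_nonneg x
  have hg2 : 0 < g2 := by
    rcases hg2nn.lt_or_eq with h | h
    · exact h
    · exfalso
      have h0 : (∫ x, x ^ 2 ∂ν) = 0 := by rw [hsec, ← h]
      have hz := (integral_eq_zero_iff_of_nonneg_ae
        (Filter.Eventually.of_forall fun x => sq_nonneg x) hint2).1 h0
      obtain ⟨x, hx1, hx2⟩ := (hz.and hae).exists
      simp only [Pi.zero_apply] at hx1
      nlinarith
  set p : ℝ := g1 ^ 2 / g2 with hpdef
  have hp0 : 0 < p := by positivity
  have hl0 := hl.1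
  have hl1 := hl.2
  set v : ℝ := m * g1 * (1 - l) with hvdef
  have hv0 : 0 < v := by rw [hvdef]; exact mul_pos (mul_pos hm hg1) (by linarith)
  have hE : Real.exp (-v) = l := by
    have h : -v = -(m * g1) + m * g1 * l := by rw [hvdef]; ring
    rw [h, ← hlroot]
  set s : ℝ := m * p * (1 - l) with hsdef
  have hs0 : 0 < s := by rw [hsdef]; exact mul_pos (mul_pos hm hp0) (by linarith)
  -- integrability of the exponentials
  have expint : ∀ t : ℝ, 0 < t → Integrable (fun x => Real.exp (-t * x)) ν := by
    intro t ht
    refine Integrable.mono' (integrable_const 1)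
      ((Real.continuous_exp.comp (continuous_const.mul continuous_id)).aestronglyMeasurable) ?_
    filter_upwards [hae] with x hx
    rw [Real.norm_eq_abs, abs_of_pos (Real.exp_pos _)]
    have h1 : -t * x ≤ 0 := by nlinarith
    calc Real.exp (-t * x) ≤ Real.exp 0 := Real.exp_le_exp.2 h1
    _ = 1 := Real.exp_zero
  -- the quadratic majorant coefficients
  set c : ℝ := Real.exp (-v) * (Real.exp v - 1 - v) / v ^ 2 with hcdef
  set c₀ : ℝ := Real.exp (-v) * (1 + v) + c * v ^ 2 with hc0def
  set c₁ : ℝ := -(Real.exp (-v) * s) - 2 * c * v * s with hc1def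
  set c₂ : ℝ := c * s ^ 2 with hc2def
  -- pointwise bound
  have hpt : ∀ᵐ x ∂ν, Real.exp (-s * x) ≤ c₀ + c₁ * x + c₂ * x ^ 2 := by
    filter_upwards [hae] with x hx
    have hy : v - s * x ≤ v := by nlinarith
    have hq := exp_quad_bound (v - s * x) v hv0 hy
    have hsplit : Real.exp (-s * x) = Real.exp (-v) * Real.exp (v - s * x) := by
      rw [← Real.exp_add]; ring_nf
    have hb : Real.exp (-v) * Real.exp (v - s * x)
        ≤ Real.exp (-v) * (1 + (v - s * x) + (v - s * x) ^ 2 / v ^ 2 * (Real.exp v - 1 - v)) :=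
      mul_le_mul_of_nonneg_left hq (Real.exp_pos _).le
    have heqq : Real.exp (-v) * (1 + (v - s * x) + (v - s * x) ^ 2 / v ^ 2 * (Real.exp v - 1 - v))
        = c₀ + c₁ * x + c₂ * x ^ 2 := by
      rw [hc0def, hc1def, hc2def, hcdef]
      field_simp
      ring
    rw [hsplit, ← heqq]
    exact hb
  -- integrate the bound
  have i1 : Integrable (fun x : ℝ => c₁ * x) ν := hint1.const_mul c₁
  have i2 : Integrable (fun x : ℝ => c₂ * x ^ 2) ν := hint2.const_mul c₂
  have i01 : Integrable (fun x : ℝ => c₀ + c₁ * x) ν := (integrable_const c₀).add i1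
  have hRint : Integrable (fun x => c₀ + c₁ * x + c₂ * x ^ 2) ν := i01.add i2
  have hIR : ∫ x, (c₀ + c₁ * x + c₂ * x ^ 2) ∂ν = c₀ + c₁ * g1 + c₂ * g2 := by
    rw [integral_add i01 i2, integral_add (integrable_const c₀) i1,
      integral_const, integral_const_mul, integral_const_mul, hmean, hsec]
    simp [measure_univ]
  -- algebraic identification of the bound
  have hsg1 : s * g1 = p * v := by rw [hsdef, hvdef]; ring
  have hs2g2 : s ^ 2 * g2 = p * v ^ 2 := by
    rw [hsdef, hvdef, hpdef]; field_simp
  have hcv : c * v ^ 2 = 1 - Real.exp (-v) - Real.exp (-v) * v := by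
    rw [hcdef, Real.exp_neg]
    have := Real.exp_pos v
    field_simp
  have heq : c₀ + c₁ * g1 + c₂ * g2 = 1 + p * (l - 1) := by
    rw [hc0def, hc1def, hc2def]
    linear_combination (-(Real.exp (-v)) - 2 * c * v) * hsg1 + c * hs2g2
      + (1 - p) * hcv + p * hE
  have hI : ∫ x, Real.exp (-s * x) ∂ν ≤ 1 + p * (l - 1) := by
    have h1 := integral_mono_ae (expint s hs0) hRint hpt
    rwa [hIR, heq] at h1
  -- fixed point comparison via strict convexity
  set A : ℝ := 1 + p * (l - 1) with hAdef
  by_contra hcon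
  push_neg at hcon
  have h1γ : 0 < 1 - γ := by linarith [hγ.2]
  have h1A : 1 - A = p * (1 - l) := by rw [hAdef]; ring
  have h1A0 : 0 < 1 - A := by rw [h1A]; exact mul_pos hp0 (by linarith)
  set θ : ℝ := (1 - γ) / (1 - A) with hθdef
  have hθ0 : 0 < θ := by rw [hθdef]; exact div_pos h1γ h1A0
  have hθ1 : θ < 1 := by
    rw [hθdef, div_lt_one h1A0]
    linarith
  have hsA : s = m * (1 - A) := by rw [h1A, hsdef]; ring
  have hθs : θ * s = m - m * γ := by
    rw [hθdef, hsA]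
    field_simp
  have hpt2 : ∀ᵐ x ∂ν, Real.exp (-(m - m * γ) * x) < θ * Real.exp (-s * x) + (1 - θ) := by
    filter_upwards [hae] with x hx
    have hsx : 0 < s * x := mul_pos hs0 hx
    have hne : -s * x ≠ (0:ℝ) := ne_of_lt (by linarith)
    have hsc := strictConvexOn_exp.2 (Set.mem_univ (-s * x)) (Set.mem_univ (0:ℝ)) hne hθ0
      (by linarith : (0:ℝ) < 1 - θ) (by ring)
    simp only [smul_eq_mul, mul_zero, add_zero, Real.exp_zero, mul_one] at hsc
    have harg : θ * (-s * x) = -(m - m * γ) * x := by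
      rw [show θ * (-s * x) = -(θ * s) * x from by ring, hθs]
    rw [← harg]
    exact hsc
  have hmint : Integrable (fun x => Real.exp (-(m - m * γ) * x)) ν :=
    expint (m - m * γ) (by nlinarith)
  have hD0 : ∀ᵐ x ∂ν,
      0 ≤ θ * Real.exp (-s * x) + (1 - θ) - Real.exp (-(m - m * γ) * x) := by
    filter_upwards [hpt2] with x hx
    linarith
  have j1 : Integrable (fun x : ℝ => θ * Real.exp (-s * x)) ν := (expint s hs0).const_mul θ
  have j2 : Integrable (fun x : ℝ => θ * Real.exp (-s * x) + (1 - θ)) ν :=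
    j1.add (integrable_const (1 - θ))
  have hDint : Integrable
      (fun x => θ * Real.exp (-s * x) + (1 - θ) - Real.exp (-(m - m * γ) * x)) ν :=
    j2.sub hmint
  have hDI : ∫ x, (θ * Real.exp (-s * x) + (1 - θ) - Real.exp (-(m - m * γ) * x)) ∂ν
      = θ * (∫ x, Real.exp (-s * x) ∂ν) + (1 - θ) - γ := by
    rw [integral_sub j2 hmint, integral_add j1 (integrable_const (1 - θ)),
      integral_const_mul, integral_const, hγroot]
    simp [measure_univ]
  have hpos : 0 < ∫ x, (θ * Real.exp (-s * x) + (1 - θ) - Real.exp (-(m - m * γ) * x)) ∂ν := by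
    rcases (integral_nonneg_of_ae hD0).lt_or_eq with h | h
    · exact h
    · exfalso
      have hz := (integral_eq_zero_iff_of_nonneg_ae hD0 hDint).1 h.symm
      obtain ⟨x, hx1, hx2⟩ := (hz.and hpt2).exists
      simp only [Pi.zero_apply] at hx1
      linarith
  rw [hDI] at hpos
  have hθI : θ * (∫ x, Real.exp (-s * x) ∂ν) ≤ θ * A :=
    mul_le_mul_of_nonneg_left hI hθ0.le
  have hfin : θ * (1 - A) = 1 - γ := by
    rw [hθdef]
    exact div_mul_cancel₀ _ h1A0.ne'
  have hfin' : θ * A = θ - 1 + γ := by linear_combination (-1 : ℝ) * hfin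
  linarith
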